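/- If G is a 5-regular finite simple graph in which every edge lies in a triangle, then every vertex of G is incident to at least one edge that lies in at least two triangles. -/

import Mathlib

lemma even_card_of_invol {V : Type*} [DecidableEq V] (s : Finset V) (f : V → V)
    (hmem : ∀ x ∈ s, f x ∈ s) (hinv : ∀ x ∈ s, f (f x) = x) (hne : ∀ x ∈ s, f x ≠ x) :
    Even s.card := by
  induction s using Finset.strongInduction with
  | _ s ih =>
    rcases s.eq_empty_or_nonempty with rfl | ⟨a, ha⟩
    · simp
    · have hfa : f a ∈ s := hmem a ha
      set t := s \ {a, f a} with ht
      have hsub : t ⊂ s := by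
        refine Finset.ssubset_iff_of_subset (Finset.sdiff_subset) |>.mpr ⟨a, ha, ?_⟩
        simp [ht]
      have hT : Even t.card := by
        refine ih t hsub (fun x hx => ?_) (fun x hx => ?_) (fun x hx => ?_)
        · rw [ht, Finset.mem_sdiff] at hx ⊢
          obtain ⟨hxs, hx2⟩ := hx
          refine ⟨hmem x hxs, ?_⟩
          simp only [Finset.mem_insert, Finset.mem_singleton] at hx2 ⊢
          push_neg at hx2 ⊢
          constructor
          · intro h
            have hx' : f a = x := by rw [← h, hinv x hxs]
            exact hx2.2 hx'.symm
          · intro h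
            have hx' : x = a := by rw [← hinv x hxs, h, hinv a ha]
            exact hx2.1 hx'
        · exact hinv x (Finset.mem_sdiff.mp hx).1
        · exact hne x (Finset.mem_sdiff.mp hx).1
      have hcard : s.card = t.card + 2 := by
        have hpair : ({a, f a} : Finset V) ⊆ s := by
          intro x hx
          simp only [Finset.mem_insert, Finset.mem_singleton] at hx
          rcases hx with rfl | rfl <;> assumption
        have h2 : ({a, f a} : Finset V).card = 2 := by
          rw [Finset.card_insert_of_notMem (by simpa using (hne a ha).symm)]
          simp
        have hle := Finset.card_le_card hpair
        rw [h2] at hle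
        rw [ht, Finset.card_sdiff_of_subset hpair, h2]
        omega
      rw [hcard]
      exact hT.add (Even.add_self 1)

/-- In a 5-regular graph with every edge in a triangle, every vertex is incident
to an edge lying in at least two triangles (i.e. whose endpoints have at least
two common neighbours). -/
theorem stmt_8 {V : Type*} [Fintype V] [DecidableEq V] (G : SimpleGraph V)
    [DecidableRel G.Adj]
    (hreg : G.IsRegularOfDegree 5)
    (htri : ∀ u v : V, G.Adj u v → ∃ w : V, G.Adj u w ∧ G.Adj v w) :
    ∀ v : V, ∃ u : V, G.Adj v u ∧
      2 ≤ (G.neighborFinset v ∩ G.neighborFinset u).card := by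
  intro v
  by_contra h
  push_neg at h
  -- every neighbor u of v: the common-neighbor set is a singleton
  have hone : ∀ u, G.Adj v u →
      ∃ w, G.neighborFinset v ∩ G.neighborFinset u = {w} := by
    intro u hu
    obtain ⟨w, hw1, hw2⟩ := htri v u hu
    have hwin : w ∈ G.neighborFinset v ∩ G.neighborFinset u := by
      simp [SimpleGraph.mem_neighborFinset, hw1, hw2]
    have h1 : 1 ≤ (G.neighborFinset v ∩ G.neighborFinset u).card :=
      Finset.card_pos.mpr ⟨w, hwin⟩
    have h2 := h u hu
    have : (G.neighborFinset v ∩ G.neighborFinset u).card = 1 := by omega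
    exact Finset.card_eq_one.mp this
  classical
  -- define the pairing function
  set f : V → V := fun u => if hu : G.Adj v u then (hone u hu).choose else u with hf
  have hfspec : ∀ u (hu : G.Adj v u),
      G.neighborFinset v ∩ G.neighborFinset u = {f u} := by
    intro u hu
    simp only [hf, dif_pos hu]
    exact (hone u hu).choose_spec
  have hfmem : ∀ u ∈ G.neighborFinset v, f u ∈ G.neighborFinset v := by
    intro u hu
    rw [SimpleGraph.mem_neighborFinset] at hu
    have := hfspec u hu
    have : f u ∈ G.neighborFinset v ∩ G.neighborFinset u := by
      rw [this]; simp
    exact (Finset.mem_inter.mp this).1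
  have hfadj : ∀ u (hu : G.Adj v u), G.Adj u (f u) := by
    intro u hu
    have : f u ∈ G.neighborFinset v ∩ G.neighborFinset u := by
      rw [hfspec u hu]; simp
    have := (Finset.mem_inter.mp this).2
    rw [SimpleGraph.mem_neighborFinset] at this
    exact this
  have hfinv : ∀ u ∈ G.neighborFinset v, f (f u) = u := by
    intro u hu
    rw [SimpleGraph.mem_neighborFinset] at hu
    have hfu : G.Adj v (f u) := by
      have := hfmem u (by rw [SimpleGraph.mem_neighborFinset]; exact hu)
      rwa [SimpleGraph.mem_neighborFinset] at this
    have huin : u ∈ G.neighborFinset v ∩ G.neighborFinset (f u) := by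
      simp only [Finset.mem_inter, SimpleGraph.mem_neighborFinset]
      exact ⟨hu, (hfadj u hu).symm⟩
    rw [hfspec (f u) hfu] at huin
    exact (Finset.mem_singleton.mp huin).symm
  have hfne : ∀ u ∈ G.neighborFinset v, f u ≠ u := by
    intro u hu heq
    rw [SimpleGraph.mem_neighborFinset] at hu
    have := hfadj u hu
    rw [heq] at this
    exact G.loopless.irrefl u this
  have heven := even_card_of_invol (G.neighborFinset v) f hfmem hfinv hfne
  rw [G.card_neighborFinset_eq_degree, hreg v] at heven
  exact (by decide : ¬ Even 5) heven
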